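/- Let A ⊆ 2^ℕ be an almost disjoint family of infinite subsets of ℕ (i.e. any two distinct members of A have finite intersection) which is closed as a subset of the Cantor space 2^ℕ. Then the ideal I(A) generated by A together with the finite sets — namely, x ∈ I(A) iff x ⊆ s ∪ a₁ ∪ … ∪ a_k for some finite s ⊆ ℕ and a₁,…,a_k ∈ A — is uniformly selective. -/

import Mathlib

open Set

/-- The Cantor space `2^ℕ`: subsets of `ℕ` identified with their characteristic functions. -/
abbrev Cantor : Type := ℕ → Bool

/-- The subset of `ℕ` coded by a point of Cantor space. -/
def toSet (x : Cantor) : Set ℕ := {n | x n = true}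

/-- `s ⊑ z` : the finite set `s` is an initial segment of `z ⊆ ℕ`,
i.e. `s = z ∩ {0,1,…,n}` for some `n`. -/
def InitSeg (s : Finset ℕ) (z : Set ℕ) : Prop := ∃ n : ℕ, (s : Set ℕ) = z ∩ Set.Iic n

/-- `s ⊑ t` for finite sets `s, t`. -/
def InitSegF (s t : Finset ℕ) : Prop := ∃ n : ℕ, s = t ∩ Finset.Iic n

/-- `B` is a front on the set `x ⊆ ℕ`: all members of `B` are subsets of `x`, any two
members of `B` are `⊑`-incomparable, and every infinite subset of `x` has an initial
segment in `B`. -/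
def IsFrontOn (B : Set (Finset ℕ)) (x : Set ℕ) : Prop :=
  (∀ s ∈ B, (s : Set ℕ) ⊆ x) ∧
  (∀ s ∈ B, ∀ t ∈ B, InitSegF s t → s = t) ∧
  (∀ y : Set ℕ, y ⊆ x → y.Infinite → ∃ s ∈ B, InitSeg s y)

/-- `y` is `F`-homogeneous: either every infinite subset of `y` has an initial segment
in `F`, or no finite subset of `y` belongs to `F`. -/
def Homog (F : Set (Finset ℕ)) (y : Set ℕ) : Prop :=
  (∀ z : Set ℕ, z ⊆ y → z.Infinite → ∃ s ∈ F, InitSeg s z) ∨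
  (∀ s : Finset ℕ, (s : Set ℕ) ⊆ y → s ∉ F)

/-- `I` is an ideal on `ℕ`: a family of subsets of `ℕ` closed under taking subsets
and under finite unions. -/
def IsIdeal (I : Set Cantor) : Prop :=
  (∀ x ∈ I, ∀ y : Cantor, toSet y ⊆ toSet x → y ∈ I) ∧
  (∀ x ∈ I, ∀ y ∈ I, (fun n => x n || y n) ∈ I)

/-- `I` is an `Fσ` subset of the Cantor space. -/
def IsFsigma (I : Set Cantor) : Prop :=
  ∃ C : ℕ → Set Cantor, (∀ n, IsClosed (C n)) ∧ I = ⋃ n, C n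

/-- A family `C` is tall if every infinite subset of `ℕ` contains an infinite member of `C`. -/
def Tall (C : Set Cantor) : Prop :=
  ∀ x : Cantor, (toSet x).Infinite → ∃ y ∈ C, (toSet y).Infinite ∧ toSet y ⊆ toSet x

/-- `S` is a Borel selector for the family `C`. -/
def IsSelector (C : Set Cantor) (S : Cantor → Cantor) : Prop :=
  Measurable S ∧ ∀ x : Cantor,
    toSet (S x) ⊆ toSet x ∧ ((toSet x).Infinite → (toSet (S x)).Infinite) ∧ S x ∈ C

/-- A Borel ideal `I` is uniformly selective. -/
def UnifSelective (I : Set Cantor) : Prop :=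
  ∃ F : (ℕ → Cantor) → Cantor, Measurable F ∧
    ∀ xs : ℕ → Cantor, (∀ n, xs n ∉ I) → (∀ n, toSet (xs (n + 1)) ⊆ toSet (xs n)) →
      F xs ∉ I ∧ ∀ n ∈ toSet (F xs), toSet (F xs) \ Set.Iic n ⊆ toSet (xs n)

/-- A Borel ideal `I` is uniformly `p⁺`. -/
def UnifPplus (I : Set Cantor) : Prop :=
  ∃ G : (ℕ → Cantor) → Cantor, Measurable G ∧
    ∀ xs : ℕ → Cantor, (∀ n, xs n ∉ I) → (∀ n, toSet (xs (n + 1)) ⊆ toSet (xs n)) →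
      G xs ∉ I ∧ ∀ n, (toSet (G xs) \ toSet (xs n)).Finite

/-- `(t n)_{n∈ℕ}` is a partition of `x` into finite sets. -/
def FinPartition (x : Cantor) (t : ℕ → Cantor) : Prop :=
  (∀ n, (toSet (t n)).Finite) ∧
  (∀ m n, m ≠ n → Disjoint (toSet (t m)) (toSet (t n))) ∧
  (⋃ n, toSet (t n)) = toSet x

/-- A Borel ideal `I` is uniformly `q⁺`. -/
def UnifQplus (I : Set Cantor) : Prop :=
  ∃ F : Cantor × (ℕ → Cantor) → Cantor, Measurable F ∧
    ∀ (x : Cantor) (t : ℕ → Cantor), x ∉ I → FinPartition x t →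
      toSet (F (x, t)) ⊆ toSet x ∧ F (x, t) ∉ I ∧
      ∀ n, (toSet (F (x, t)) ∩ toSet (t n)).Subsingleton

/-- The ideal `I` is `q⁺`. -/
def Qplus (I : Set Cantor) : Prop :=
  ∀ (x : Cantor) (t : ℕ → Cantor), x ∉ I → FinPartition x t →
    ∃ y : Cantor, toSet y ⊆ toSet x ∧ y ∉ I ∧
      ∀ n, (toSet y ∩ toSet (t n)).Subsingleton

/-- The ideal `I` is selective. -/
def Selective (I : Set Cantor) : Prop :=
  ∀ xs : ℕ → Cantor, (∀ n, xs n ∉ I) → (∀ n, toSet (xs (n + 1)) ⊆ toSet (xs n)) →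
    ∃ x : Cantor, x ∉ I ∧ ∀ n ∈ toSet x, toSet x \ Set.Iic n ⊆ toSet (xs n)

/-- The ideal generated by `K`: `x ∈ IdealGen K` iff `x ⊆ y₁ ∪ … ∪ y_n` for some
`y₁, …, y_n ∈ K`. -/
def IdealGen (K : Set Cantor) : Set Cantor :=
  {x | ∃ l : List Cantor, l ≠ [] ∧ (∀ y ∈ l, y ∈ K) ∧ toSet x ⊆ ⋃ y ∈ l, toSet y}

/-- `↓K = {x : x ⊆ y for some y ∈ K}`. -/
def Down (K : Set Cantor) : Set Cantor := {x | ∃ y ∈ K, toSet x ⊆ toSet y}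

/-- `C` is hereditary: closed under taking subsets. -/
def Hereditary (C : Set Cantor) : Prop :=
  ∀ x ∈ C, ∀ y : Cantor, toSet y ⊆ toSet x → y ∈ C

/-- `A ⊆ 2^ℕ` is `Σ¹₂`: the projection of a coanalytic subset of `2^ℕ × ℕ^ℕ`. -/
def Sigma12 (A : Set Cantor) : Prop :=
  ∃ C : Set (Cantor × (ℕ → ℕ)), MeasureTheory.AnalyticSet Cᶜ ∧
    A = {x | ∃ w : ℕ → ℕ, (x, w) ∈ C}

/-- `A ⊆ 2^ℕ` is `Π¹₂`: the complement of a `Σ¹₂` set. -/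
def Pi12 (A : Set Cantor) : Prop := Sigma12 Aᶜ

open scoped Classical

namespace CAD

/-! ### A canonical choice operator -/

noncomputable def pick {α : Type} [Encodable α] (d : α) (P : α → Prop) : α :=
  if h : ∃ n : ℕ, ∃ a, Encodable.decode (α := α) n = some a ∧ P a
  then (Encodable.decode (α := α) (Nat.find h)).getD d
  else d

lemma pick_spec {α : Type} [Encodable α] (d : α) (P : α → Prop) (h : ∃ a, P a) :
    P (pick d P) := by
  obtain ⟨a, ha⟩ := h
  have hn : ∃ n : ℕ, ∃ a, Encodable.decode (α := α) n = some a ∧ P a :=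
    ⟨Encodable.encode a, a, Encodable.encodek a, ha⟩
  rw [pick, dif_pos hn]
  obtain ⟨a', ha', hPa'⟩ := Nat.find_spec hn
  rw [ha']
  exact hPa'

lemma pick_eq_iff {α : Type} [Encodable α] (d : α) (P : α → Prop) (a : α) :
    pick d P = a ↔
      ((¬ ∃ n : ℕ, ∃ b, Encodable.decode (α := α) n = some b ∧ P b) ∧ d = a) ∨
      (∃ n : ℕ, (∃ b, Encodable.decode (α := α) n = some b ∧ P b) ∧
        (∀ k < n, ¬ ∃ b, Encodable.decode (α := α) k = some b ∧ P b) ∧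
        (Encodable.decode (α := α) n).getD d = a) := by
  unfold pick
  by_cases h : ∃ n : ℕ, ∃ b, Encodable.decode (α := α) n = some b ∧ P b
  · rw [dif_pos h]
    constructor
    · intro heq
      exact Or.inr ⟨Nat.find h, Nat.find_spec h, fun k hk => Nat.find_min h hk, heq⟩
    · rintro (⟨hno, _⟩ | ⟨n, hn, hmin, heq⟩)
      · exact absurd h hno
      · have : Nat.find h = n := by
          rw [Nat.find_eq_iff]
          exact ⟨hn, hmin⟩
        rw [this]; exact heq
  · rw [dif_neg h]
    constructor
    · intro heq; exact Or.inl ⟨h, heq⟩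
    · rintro (⟨_, heq⟩ | ⟨n, hn, _, _⟩)
      · exact heq
      · exact absurd ⟨n, hn⟩ h

/-! ### Measurability toolkit -/

variable {X : Type} [MeasurableSpace X]

lemma ev_pick {α : Type} [Encodable α] (d : α) (P : X → α → Prop)
    (hP : ∀ a, MeasurableSet {x | P x a}) (a : α) :
    MeasurableSet {x | pick d (P x) = a} := by
  have hQ : ∀ n : ℕ, MeasurableSet {x | ∃ b, Encodable.decode (α := α) n = some b ∧ P x b} := by
    intro n
    cases hdec : Encodable.decode (α := α) n with
    | none =>
      rw [show {x : X | ∃ b, (none : Option α) = some b ∧ P x b} = ∅ by ext x; simp]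
      exact MeasurableSet.empty
    | some b =>
      have : {x : X | ∃ c, (some b : Option α) = some c ∧ P x c} = {x | P x b} := by
        ext x; simp
      simp only [hdec, this]; exact hP b
  have : {x | pick d (P x) = a} =
      ({x : X | ¬ ∃ n : ℕ, ∃ b, Encodable.decode (α := α) n = some b ∧ P x b} ∩
        {x : X | d = a}) ∪
      ⋃ n : ℕ, ({x | ∃ b, Encodable.decode (α := α) n = some b ∧ P x b} ∩
        (⋂ k : ℕ, ⋂ _ : k < n, {x | ¬ ∃ b, Encodable.decode (α := α) k = some b ∧ P x b}) ∩
        {x : X | (Encodable.decode (α := α) n).getD d = a}) := by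
    ext x
    rw [Set.mem_setOf_eq, pick_eq_iff]
    simp only [Set.mem_union, Set.mem_inter_iff, Set.mem_iUnion, Set.mem_iInter,
      Set.mem_setOf_eq]
    tauto
  rw [this]
  have hconst : ∀ p : Prop, MeasurableSet {_x : X | p} := by
    intro p
    by_cases hp : p
    · simp only [hp]; simpa using MeasurableSet.univ
    · simp only [hp]; simpa using MeasurableSet.empty
  refine MeasurableSet.union ?_ (MeasurableSet.iUnion fun n => ?_)
  · refine MeasurableSet.inter ?_ (hconst _)
    have : {x : X | ¬∃ n : ℕ, ∃ b, Encodable.decode (α := α) n = some b ∧ P x b} =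
        ⋂ n : ℕ, {x | ∃ b, Encodable.decode (α := α) n = some b ∧ P x b}ᶜ := by
      ext x; simp [not_exists]
    rw [this]
    exact MeasurableSet.iInter fun n => (hQ n).compl
  · refine MeasurableSet.inter (MeasurableSet.inter (hQ n) ?_) (hconst _)
    refine MeasurableSet.iInter fun k => MeasurableSet.iInter fun _ => ?_
    rw [show {x : X | ¬ ∃ b, Encodable.decode (α := α) k = some b ∧ P x b}
        = {x : X | ∃ b, Encodable.decode (α := α) k = some b ∧ P x b}ᶜ from rfl]
    exact (hQ k).compl

lemma ev_bind {D : Type} [Countable D] (g : X → D)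
    (hg : ∀ d, MeasurableSet {x | g x = d})
    (T : D → Set X) (hT : ∀ d, MeasurableSet (T d)) :
    MeasurableSet {x | x ∈ T (g x)} := by
  have : {x | x ∈ T (g x)} = ⋃ d : D, ({x | g x = d} ∩ T d) := by
    ext x
    simp only [Set.mem_setOf_eq, Set.mem_iUnion, Set.mem_inter_iff]
    constructor
    · intro h; exact ⟨g x, rfl, h⟩
    · rintro ⟨d, rfl, h⟩; exact h
  rw [this]
  exact MeasurableSet.iUnion fun d => (hg d).inter (hT d)



end CAD

namespace CAD

variable (A : Set Cantor)

def Uu {m : ℕ} (ab : Fin m → Cantor) : Set ℕ := ⋃ i, toSet (ab i)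

def Cov (m : ℕ) (s : Finset ℕ) : Prop :=
  ∃ ab : Fin m → Cantor, (∀ i, ab i ∈ A) ∧ (s : Set ℕ) ⊆ Uu ab

def Pos (c : Set ℕ) : Prop :=
  ∀ (m : ℕ) (ab : Fin m → Cantor), (∀ i, ab i ∈ A) → (c \ Uu ab).Infinite

def SmallId (c : Set ℕ) : Prop :=
  ∃ (b m : ℕ) (ab : Fin m → Cantor), (∀ i, ab i ∈ A) ∧ c \ Set.Iic b ⊆ Uu ab

def SelF (t : ℕ → Set ℕ) (s : Finset ℕ) : Prop :=
  ∃ g : ℕ → ℕ, (∀ p ∈ s, p ∈ t (g p)) ∧ Set.InjOn g (s : Set ℕ)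

variable {A}

lemma selF_subset {t : ℕ → Set ℕ} {s s' : Finset ℕ} (h : SelF t s) (hsub : s' ⊆ s) :
    SelF t s' := by
  obtain ⟨g, h1, h2⟩ := h
  exact ⟨g, fun p hp => h1 p (hsub hp), h2.mono (by exact_mod_cast hsub)⟩

lemma pos_iff_not_small {c : Set ℕ} : Pos A c ↔ ¬ SmallId A c := by
  constructor
  · rintro hpos ⟨b, m, ab, hab, hsub⟩
    have hinf := hpos m ab hab
    have : c \ Uu ab ⊆ Set.Iic b := by
      intro p hp
      by_contra hpb
      exact hp.2 (hsub ⟨hp.1, hpb⟩)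
    exact ((Set.finite_Iic b).subset this).not_infinite hinf
  · intro hns m ab hab
    by_contra hfin
    rw [Set.not_infinite] at hfin
    obtain ⟨b, hb⟩ := hfin.bddAbove
    refine hns ⟨b, m, ab, hab, ?_⟩
    intro p hp
    by_contra hpU
    exact hp.2 (hb ⟨hp.1, hpU⟩)

lemma small_mono {c c' : Set ℕ} (h : c ⊆ c') (hs : SmallId A c') : SmallId A c := by
  obtain ⟨b, m, ab, hab, hsub⟩ := hs
  exact ⟨b, m, ab, hab, fun p hp => hsub ⟨h hp.1, hp.2⟩⟩

lemma small_union {c c' : Set ℕ} (h : SmallId A c) (h' : SmallId A c') :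
    SmallId A (c ∪ c') := by
  obtain ⟨b, m, ab, hab, hsub⟩ := h
  obtain ⟨b', m', ab', hab', hsub'⟩ := h'
  refine ⟨max b b', m + m', fun j => if hj : (j : ℕ) < m then ab ⟨j, hj⟩
    else ab' ⟨(j : ℕ) - m, by omega⟩, ?_, ?_⟩
  · intro j
    by_cases hj : (j : ℕ) < m
    · simp only [dif_pos hj]; exact hab _
    · simp only [dif_neg hj]; exact hab' _
  · rintro p ⟨hp, hpb⟩
    have hpb1 : p ∉ Set.Iic b := fun hh =>
      hpb (Set.mem_Iic.mpr (le_trans (Set.mem_Iic.mp hh) (le_max_left b b')))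
    have hpb2 : p ∉ Set.Iic b' := fun hh =>
      hpb (Set.mem_Iic.mpr (le_trans (Set.mem_Iic.mp hh) (le_max_right b b')))
    rcases hp with hp | hp
    · obtain ⟨si, hsi⟩ := Set.mem_iUnion.mp (hsub ⟨hp, hpb1⟩)
      refine Set.mem_iUnion.mpr ⟨⟨(si : ℕ), lt_of_lt_of_le si.isLt (Nat.le_add_right m m')⟩, ?_⟩
      simpa only [dif_pos si.isLt, Fin.eta] using hsi
    · obtain ⟨si, hsi⟩ := Set.mem_iUnion.mp (hsub' ⟨hp, hpb2⟩)
      refine Set.mem_iUnion.mpr ⟨⟨m + (si : ℕ), Nat.add_lt_add_left si.isLt m⟩, ?_⟩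
      have hno : ¬ (m + (si : ℕ) < m) := by omega
      simp only [dif_neg hno]
      have : m + (si : ℕ) - m = (si : ℕ) := by omega
      simpa [this, Fin.eta] using hsi

lemma cov_of_subset {m m' : ℕ} (hm : m ≤ m') {ab : Fin m → Cantor}
    (hab : ∀ i, ab i ∈ A) {s : Finset ℕ} (hs : s.Nonempty)
    (hsub : (s : Set ℕ) ⊆ Uu ab) : Cov A m' s := by
  rcases Nat.eq_zero_or_pos m with hm0 | hmpos
  · subst hm0
    obtain ⟨p, hp⟩ := hs
    obtain ⟨i, _⟩ := Set.mem_iUnion.mp (hsub (by exact_mod_cast hp))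
    exact i.elim0
  · refine ⟨fun j => if hj : (j : ℕ) < m then ab ⟨j, hj⟩ else ab ⟨0, hmpos⟩, ?_, ?_⟩
    · intro j; by_cases hj : (j : ℕ) < m
      · simp only [dif_pos hj]; exact hab _
      · simp only [dif_neg hj]; exact hab _
    · intro p hp
      obtain ⟨si, hsi⟩ := Set.mem_iUnion.mp (hsub hp)
      refine Set.mem_iUnion.mpr ⟨⟨(si : ℕ), lt_of_lt_of_le si.isLt hm⟩, ?_⟩
      simpa only [dif_pos si.isLt, Fin.eta] using hsi

lemma listU (l : List Cantor) :
    (⋃ a ∈ l, toSet a) = Uu (fun i : Fin l.length => l.get i) := by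
  ext p
  simp only [Set.mem_iUnion, Uu]
  constructor
  · rintro ⟨a, ha, hp⟩
    obtain ⟨i, rfl⟩ := List.mem_iff_get.mp ha
    exact ⟨i, hp⟩
  · rintro ⟨i, hp⟩
    exact ⟨l.get i, l.get_mem _, hp⟩

/-- The compactness lemma: if every finite trace of `c` is covered by `m` members
of the closed family `A`, then all of `c` is. -/
lemma cov_compact (hclosed : IsClosed A) {m : ℕ} {c : Set ℕ}
    (h : ∀ j : ℕ, ∃ ab : Fin m → Cantor, (∀ i, ab i ∈ A) ∧ c ∩ Set.Iic j ⊆ Uu ab) :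
    ∃ ab : Fin m → Cantor, (∀ i, ab i ∈ A) ∧ c ⊆ Uu ab := by
  set t : ℕ → Set (Fin m → Cantor) :=
    fun j => {ab | (∀ i, ab i ∈ A) ∧ c ∩ Set.Iic j ⊆ Uu ab} with ht
  have htsub : ∀ j, t (j + 1) ⊆ t j := by
    intro j ab hab
    exact ⟨hab.1, fun p hp => hab.2 ⟨hp.1, Set.mem_Iic.mpr (le_trans (Set.mem_Iic.mp hp.2) (Nat.le_succ j))⟩⟩
  have htne : ∀ j, (t j).Nonempty := fun j => h j
  have htcl : ∀ j, IsClosed (t j) := by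
    intro j
    have h1 : IsClosed {ab : Fin m → Cantor | ∀ i, ab i ∈ A} := by
      have : {ab : Fin m → Cantor | ∀ i, ab i ∈ A} = ⋂ i, (fun ab => ab i) ⁻¹' A := by
        ext ab; simp
      rw [this]
      exact isClosed_iInter fun i => hclosed.preimage (continuous_apply i)
    have h2 : IsClosed {ab : Fin m → Cantor | c ∩ Set.Iic j ⊆ Uu ab} := by
      have : {ab : Fin m → Cantor | c ∩ Set.Iic j ⊆ Uu ab} =
          ⋂ p ∈ c ∩ Set.Iic j, ⋃ i : Fin m, {ab : Fin m → Cantor | ab i p = true} := by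
        ext ab
        simp only [Set.mem_setOf_eq, Set.mem_iInter, Set.mem_iUnion]
        constructor
        · intro hs p hp
          obtain ⟨i, hi⟩ := Set.mem_iUnion.mp (hs hp)
          exact ⟨i, hi⟩
        · intro hs p hp
          obtain ⟨i, hi⟩ := hs p hp
          exact Set.mem_iUnion.mpr ⟨i, hi⟩
      rw [this]
      refine isClosed_biInter fun p _ => isClosed_iUnion_of_finite fun i => ?_
      have : {ab : Fin m → Cantor | ab i p = true} =
          (fun ab : Fin m → Cantor => ab i p) ⁻¹' {true} := rfl
      rw [this]
      exact (isClosed_discrete _).preimage ((continuous_apply p).comp (continuous_apply i))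
    have : t j = {ab : Fin m → Cantor | ∀ i, ab i ∈ A} ∩
        {ab : Fin m → Cantor | c ∩ Set.Iic j ⊆ Uu ab} := rfl
    rw [this]
    exact h1.inter h2
  have hcomp : IsCompact (t 0) := (htcl 0).isCompact
  obtain ⟨ab, hab⟩ := IsCompact.nonempty_iInter_of_sequence_nonempty_isCompact_isClosed
    t htsub htne hcomp htcl
  simp only [Set.mem_iInter] at hab
  refine ⟨ab, (hab 0).1, ?_⟩
  intro p hp
  exact (hab p).2 ⟨hp, le_refl p⟩

lemma pigeon {m : ℕ} {c : Set ℕ} (hc : c.Infinite) {ab : Fin m → Cantor}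
    (hsub : c ⊆ Uu ab) : ∃ i, (c ∩ toSet (ab i)).Infinite := by
  by_contra hno
  push_neg at hno
  have : c ⊆ ⋃ i, c ∩ toSet (ab i) := by
    intro p hp
    obtain ⟨i, hi⟩ := Set.mem_iUnion.mp (hsub hp)
    exact Set.mem_iUnion.mpr ⟨i, hp, hi⟩
  exact ((Set.finite_iUnion hno).subset this).not_infinite hc


/-- The key combinatorial lemma: for a closed AD family `A`, a set `Y` positive for
the ideal of `A`, and a partition of (a superset of) `Y` into finite blocks `t j`,
there is a nonempty finite partial selector avoiding `Iic N` which is not covered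
by any `m` members of `A`. -/
lemma lemmaQ (hclosed : IsClosed A)
    (hAD : ∀ a ∈ A, ∀ b ∈ A, a ≠ b → (toSet a ∩ toSet b).Finite)
    {Y : Set ℕ} (hpos : Pos A Y) (t : ℕ → Set ℕ)
    (htfin : ∀ j, (t j).Finite)
    (htdisj : ∀ j j', ((t j) ∩ (t j')).Nonempty → j = j')
    (htcov : Y ⊆ ⋃ j, t j) (m N : ℕ) :
    ∃ s : Finset ℕ, s.Nonempty ∧ (s : Set ℕ) ⊆ Y ∧ (∀ p ∈ s, N < p) ∧
      SelF t s ∧ ¬ Cov A m s := by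
  by_contra hno
  push_neg at hno
  -- hno : every nonempty finite partial selector above N is m-covered
  -- the canonical block function
  have hgex : ∀ p : ℕ, ∃ j, p ∈ t j ∨ (¬ ∃ j', p ∈ t j') := by
    intro p
    by_cases h : ∃ j', p ∈ t j'
    · obtain ⟨j, hj⟩ := h; exact ⟨j, Or.inl hj⟩
    · exact ⟨0, Or.inr h⟩
  choose gblk hgblk using hgex
  have hgb : ∀ {p j}, p ∈ t j → gblk p = j := by
    intro p j hpj
    rcases hgblk p with h | h
    · exact htdisj _ _ ⟨p, h, hpj⟩
    · exact absurd ⟨j, hpj⟩ h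
  -- every infinite set positioned inside Y meets blocks beyond any bound
  have hmeets : ∀ c : Set ℕ, c.Infinite → c ⊆ Y → ∀ J, ∃ j, J < j ∧ (c ∩ t j).Nonempty := by
    intro c hc hcY J
    by_contra hc'
    push_neg at hc'
    have hsubJ : c ⊆ ⋃ j ∈ Set.Iic J, t j := by
      intro p hp
      obtain ⟨j, hj⟩ := Set.mem_iUnion.mp (htcov (hcY hp))
      have hjJ : j ≤ J := by
        by_contra hgt
        push_neg at hgt
        have hemp := hc' j hgt
        rw [Set.eq_empty_iff_forall_notMem] at hemp
        exact hemp p ⟨hp, hj⟩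
      exact Set.mem_biUnion hjJ hj
    exact ((Set.Finite.biUnion (Set.finite_Iic J) fun j _ => htfin j).subset hsubJ).not_infinite hc
  -- construction of block-selector sequences
  have hseq : ∀ (c : ℕ → Set ℕ), (∀ i, (c i).Infinite ∧ c i ⊆ Y) →
      ∃ jf pf : ℕ → ℕ, StrictMono jf ∧ ∀ l, pf l ∈ c l ∩ t (jf l) := by
    intro c hc
    have hstep : ∀ (i J : ℕ), ∃ j, J < j ∧ (c i ∩ t j).Nonempty :=
      fun i J => hmeets (c i) (hc i).1 (hc i).2 J
    choose jf0 hjf0lt hjf0ne using hstep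
    choose pf0 hpf0 using hjf0ne
    let G : ℕ → ℕ := fun l => Nat.rec (jf0 0 0) (fun l' prev => jf0 (l' + 1) prev) l
    have hGsucc : ∀ l, G (l + 1) = jf0 (l + 1) (G l) := fun l => rfl
    have hGmono : StrictMono G := by
      apply strictMono_nat_of_lt_succ
      intro l
      rw [hGsucc]
      exact hjf0lt (l + 1) (G l)
    refine ⟨G, fun l => Nat.casesOn l (pf0 0 0) (fun l' => pf0 (l' + 1) (G l')), hGmono, ?_⟩
    intro l
    cases l with
    | zero => exact hpf0 0 0
    | succ l' => exact hpf0 (l' + 1) (G l')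
  -- any strictly increasing block-selector sequence through Y \ Iic N is covered
  have hzcov : ∀ (jf pf : ℕ → ℕ), StrictMono jf →
      (∀ l, pf l ∈ (Y \ Set.Iic N) ∧ pf l ∈ t (jf l)) →
      ∃ ab : Fin m → Cantor, (∀ i, ab i ∈ A) ∧ Set.range pf ⊆ Uu ab := by
    intro jf pf hjf hpf
    have hpinj : Function.Injective pf := by
      intro l l' h
      have : jf l = jf l' := htdisj _ _ ⟨pf l, (hpf l).2, h ▸ (hpf l').2⟩
      exact hjf.injective this
    apply cov_compact hclosed
    intro j
    have hfin : (Set.range pf ∩ Set.Iic j).Finite :=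
      (Set.finite_Iic j).subset Set.inter_subset_right
    set f : Finset ℕ := insert (pf 0) hfin.toFinset with hf
    have hmemf : ∀ p, p ∈ f → p ∈ Set.range pf := by
      intro p hp
      rcases Finset.mem_insert.mp hp with h | h
      · exact ⟨0, h.symm⟩
      · exact (hfin.mem_toFinset.mp h).1
    have hcovf : Cov A m f := by
      apply hno f ⟨pf 0, Finset.mem_insert_self _ _⟩
      · intro p hp
        obtain ⟨l, rfl⟩ := hmemf p hp
        exact ((hpf l).1).1
      · intro p hp
        obtain ⟨l, rfl⟩ := hmemf p hp
        have := ((hpf l).1).2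
        simpa using this
      · refine ⟨gblk, ?_, ?_⟩
        · intro p hp
          obtain ⟨l, rfl⟩ := hmemf p hp
          rw [hgb (hpf l).2]
          exact (hpf l).2
        · intro p hp q hq hpq
          obtain ⟨l, rfl⟩ := hmemf p (by exact_mod_cast hp)
          obtain ⟨l', rfl⟩ := hmemf q (by exact_mod_cast hq)
          rw [hgb (hpf l).2, hgb (hpf l').2] at hpq
          rw [hjf.injective hpq]
    obtain ⟨ab, hab, hsub⟩ := hcovf
    refine ⟨ab, hab, ?_⟩
    intro p hp
    apply hsub
    have : p ∈ hfin.toFinset := hfin.mem_toFinset.mpr hp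
    exact_mod_cast Finset.mem_insert_of_mem this
  -- extracting a capturing element of A
  have hcap : ∀ c : Set ℕ, c.Infinite → c ⊆ Y \ Set.Iic N →
      ∃ b, b ∈ A ∧ (c ∩ toSet b).Infinite := by
    intro c hc hcYN
    obtain ⟨jf, pf, hjf, hpf⟩ := hseq (fun _ => c)
      (fun _ => ⟨hc, fun p hp => (hcYN hp).1⟩)
    obtain ⟨ab, hab, hsub⟩ := hzcov jf pf hjf
      (fun l => ⟨hcYN (hpf l).1, (hpf l).2⟩)
    have hpinj : Function.Injective pf := by
      intro l l' h
      have : jf l = jf l' := htdisj _ _ ⟨pf l, (hpf l).2, h ▸ (hpf l').2⟩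
      exact hjf.injective this
    have hzinf : (Set.range pf).Infinite := Set.infinite_range_of_injective hpinj
    obtain ⟨i, hi⟩ := pigeon hzinf hsub
    refine ⟨ab i, hab i, hi.mono ?_⟩
    intro p hp
    obtain ⟨⟨l, rfl⟩, hp2⟩ := hp
    exact ⟨(hpf l).1, hp2⟩
  -- the sequence b_0, b_1, ... of distinct captured elements
  have hBstep : ∀ l : List Cantor, ∃ b, (∀ a ∈ l, a ∈ A) →
      b ∈ A ∧ (((Y \ Set.Iic N) \ (⋃ a ∈ l, toSet a)) ∩ toSet b).Infinite := by
    intro l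
    by_cases hl : ∀ a ∈ l, a ∈ A
    · have hinf : ((Y \ Set.Iic N) \ (⋃ a ∈ l, toSet a)).Infinite := by
        have h1 := hpos l.length (fun i => l.get i) (fun i => hl _ (l.get_mem _))
        have h2 : ((Y \ Uu (fun i : Fin l.length => l.get i)) \ Set.Iic N).Infinite :=
          h1.diff (Set.finite_Iic N)
        apply h2.mono
        rintro p ⟨⟨hp1, hp2⟩, hp3⟩
        exact ⟨⟨hp1, hp3⟩, by rw [listU]; exact hp2⟩
      obtain ⟨b, hb⟩ := hcap _ hinf (fun p hp => hp.1)
      exact ⟨b, fun _ => hb⟩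
    · exact ⟨fun _ => false, fun h => absurd h hl⟩
  choose bch hbch using hBstep
  let L : ℕ → List Cantor := fun i => Nat.rec [] (fun _ prev => prev ++ [bch prev]) i
  let bb : ℕ → Cantor := fun i => bch (L i)
  have hLsucc : ∀ i, L (i + 1) = L i ++ [bb i] := fun i => rfl
  have hLmem : ∀ i, ∀ a ∈ L i, a ∈ A := by
    intro i
    induction i with
    | zero => intro a ha; exact absurd ha List.not_mem_nil
    | succ i ih =>
      intro a ha
      rw [hLsucc] at ha
      rcases List.mem_append.mp ha with h | h
      · exact ih a h
      · rw [List.mem_singleton.mp h]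
        exact (hbch (L i) ih).1
  have hbbA : ∀ i, bb i ∈ A := fun i => (hbch (L i) (hLmem i)).1
  have hbbInf : ∀ i, (((Y \ Set.Iic N) \ (⋃ a ∈ L i, toSet a)) ∩ toSet (bb i)).Infinite :=
    fun i => (hbch (L i) (hLmem i)).2
  have hLmem2 : ∀ i a, a ∈ L i ↔ ∃ j, j < i ∧ a = bb j := by
    intro i
    induction i with
    | zero =>
      intro a
      constructor
      · intro h; exact absurd h List.not_mem_nil
      · rintro ⟨j, hj, _⟩; omega
    | succ i ih =>
      intro a
      rw [hLsucc, List.mem_append, List.mem_singleton, ih]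
      constructor
      · rintro (⟨j, hj, rfl⟩ | rfl)
        · exact ⟨j, by omega, rfl⟩
        · exact ⟨i, by omega, rfl⟩
      · rintro ⟨j, hj, rfl⟩
        rcases Nat.lt_succ_iff_lt_or_eq.mp hj with h | h
        · exact Or.inl ⟨j, h, rfl⟩
        · subst h; exact Or.inr rfl
  have hbbne : ∀ j i, j < i → bb j ≠ bb i := by
    intro j i hji heq
    obtain ⟨p, hp⟩ := (hbbInf i).nonempty
    have hpj : p ∈ toSet (bb j) := heq ▸ hp.2
    apply hp.1.2
    exact Set.mem_biUnion ((hLmem2 i (bb j)).mpr ⟨j, hji, rfl⟩) hpj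
  -- the interleaved selector w
  obtain ⟨jf, pf, hjf, hpf⟩ := hseq
    (fun l => (Y \ Set.Iic N) ∩ toSet (bb (l % (m + 1))))
    (by
      intro l
      constructor
      · apply (hbbInf (l % (m + 1))).mono
        rintro p ⟨⟨hp1, _⟩, hp2⟩
        exact ⟨hp1, hp2⟩
      · intro p hp
        exact hp.1.1)
  obtain ⟨ab0, hab0, hwsub⟩ := hzcov jf pf hjf (fun l => ⟨(hpf l).1.1, (hpf l).2⟩)
  have hpinj : Function.Injective pf := by
    intro l l' h
    have : jf l = jf l' := htdisj _ _ ⟨pf l, (hpf l).2, h ▸ (hpf l').2⟩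
    exact hjf.injective this
  -- each bb i is a coordinate of ab0
  have hphi : ∀ i : Fin (m + 1), ∃ i' : Fin m, bb (i : ℕ) = ab0 i' := by
    intro i
    have hwiinf : (Set.range pf ∩ toSet (bb (i : ℕ))).Infinite := by
      refine Set.infinite_of_injective_forall_mem
        (f := fun l' : ℕ => pf ((i : ℕ) + (m + 1) * l')) ?_ ?_
      · intro a b hab
        have h2 := Nat.add_left_cancel (hpinj hab)
        exact Nat.eq_of_mul_eq_mul_left (Nat.succ_pos m) h2
      · intro l'
        refine ⟨⟨(i : ℕ) + (m + 1) * l', rfl⟩, ?_⟩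
        have hmod : ((i : ℕ) + (m + 1) * l') % (m + 1) = (i : ℕ) := by
          rw [Nat.add_mul_mod_self_left]
          exact Nat.mod_eq_of_lt i.isLt
        have := (hpf ((i : ℕ) + (m + 1) * l')).1.2
        rwa [hmod] at this
    have hwsub2 : Set.range pf ∩ toSet (bb (i : ℕ)) ⊆ Uu ab0 :=
      fun p hp => hwsub hp.1
    obtain ⟨i', hi'⟩ := pigeon hwiinf hwsub2
    refine ⟨i', ?_⟩
    by_contra hne
    have hfin := hAD (bb (i : ℕ)) (hbbA _) (ab0 i') (hab0 i') hne
    apply hfin.not_infinite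
    apply hi'.mono
    rintro p ⟨⟨_, hp2⟩, hp3⟩
    exact ⟨hp2, hp3⟩
  choose phi hphi2 using hphi
  have hphiinj : Function.Injective phi := by
    intro i i' h
    have : bb (i : ℕ) = bb (i' : ℕ) := by rw [hphi2 i, hphi2 i', h]
    by_contra hne
    have hne2 : (i : ℕ) ≠ (i' : ℕ) := fun hh => hne (Fin.ext hh)
    rcases Nat.lt_or_ge (i : ℕ) (i' : ℕ) with hlt | hge
    · exact hbbne _ _ hlt this
    · have hlt : (i' : ℕ) < (i : ℕ) := by omega
      exact hbbne _ _ hlt this.symm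
  have := Fintype.card_le_of_injective phi hphiinj
  simp [Fintype.card_fin] at this


/-! ### The staged construction of the Borel selector -/

variable (A)

def ph1 (xs : ℕ → Cantor) (m N : ℕ) (s : Finset ℕ) : Prop :=
  s.Nonempty ∧ (∀ p ∈ s, N < p ∧ xs m p = true) ∧ ¬ Cov A m s

noncomputable def SS (xs : ℕ → Cantor) : ℕ → Finset ℕ
  | 0 => pick ∅ (ph1 A xs 0 0)
  | m + 1 => pick ∅ (ph1 A xs (m + 1) ((SS xs m).sup id))

def yset (xs : ℕ → Cantor) : Set ℕ := {p | ∃ m, p ∈ SS A xs m}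

noncomputable def nn (xs : ℕ → Cantor) : ℕ → ℕ
  | 0 => 0
  | k + 1 => pick 0 (fun j => nn xs k < j ∧ ∀ p ∈ yset A xs, j < p → xs (nn xs k) p = true)

def Hset (xs : ℕ → Cantor) (e : ℕ) : Set ℕ :=
  {p | p ∈ yset A xs ∧ ∃ j, nn A xs (2 * j + e) < p ∧ p ≤ nn A xs (2 * j + e + 1)}

noncomputable def tr (xs : ℕ → Cantor) (e b j : ℕ) : Finset ℕ :=
  (Finset.Ioc b j).filter (fun p => p ∈ Hset A xs e)

noncomputable def eps (xs : ℕ → Cantor) : ℕ :=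
  if ∃ m b : ℕ, ∀ j, Cov A m (tr A xs 0 b j) then 1 else 0

def ph2 (xs : ℕ → Cantor) (m N : ℕ) (s : Finset ℕ) : Prop :=
  s.Nonempty ∧ (∀ p ∈ s, p ∈ Hset A xs (eps A xs) ∧ N < p) ∧
  (∀ p ∈ s, ∀ q ∈ s, p < q → ∃ k, p ≤ nn A xs k ∧ nn A xs (k + 1) < q) ∧
  ¬ Cov A m s

noncomputable def uK (xs : ℕ → Cantor) : ℕ → Finset ℕ × ℕ
  | 0 => (pick ∅ (ph2 A xs 0 (nn A xs 1)), 0)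
  | m + 1 =>
    (pick ∅ (ph2 A xs (m + 1)
        (nn A xs ((pick 0 (fun k => ∀ p ∈ (uK xs m).1, p ≤ nn A xs k)) + 1))),
      pick 0 (fun k => ∀ p ∈ (uK xs m).1, p ≤ nn A xs k))

noncomputable def Ffun (xs : ℕ → Cantor) : Cantor :=
  fun p => if ∃ m, p ∈ (uK A xs m).1 then true else false

/-! ### Measurability of the construction -/

lemma ev_val {X : Type} [MeasurableSpace X] {D : Type} [Countable D]
    (g : X → D) (hg : ∀ d, MeasurableSet {x | g x = d}) (P : D → Prop) :
    MeasurableSet {x | P (g x)} := by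
  have : {x | P (g x)} = ⋃ (d : D) (_ : P d), {x | g x = d} := by
    ext x
    simp only [Set.mem_setOf_eq, Set.mem_iUnion]
    constructor
    · intro h; exact ⟨g x, h, rfl⟩
    · rintro ⟨d, hd, hgx⟩; rw [hgx]; exact hd
  rw [this]
  exact MeasurableSet.iUnion fun d => MeasurableSet.iUnion fun _ => hg d

lemma ev_coord (i p : ℕ) : MeasurableSet {xs : ℕ → Cantor | xs i p = true} := by
  have hm : Measurable (fun xs : ℕ → Cantor => xs i p) :=
    (measurable_pi_apply p).comp (measurable_pi_apply i)
  exact hm (measurableSet_singleton true)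

lemma ev_const {X : Type} [MeasurableSpace X] (p : Prop) :
    MeasurableSet {_x : X | p} := by
  by_cases hp : p
  · simp only [hp]; simpa using MeasurableSet.univ
  · simp only [hp]; simpa using MeasurableSet.empty

lemma ev_ph1 (m N : ℕ) (s : Finset ℕ) :
    MeasurableSet {xs : ℕ → Cantor | ph1 A xs m N s} := by
  by_cases h1 : s.Nonempty ∧ (∀ p ∈ s, N < p) ∧ ¬ Cov A m s
  · have : {xs : ℕ → Cantor | ph1 A xs m N s} =
        ⋂ (p : ℕ), ⋂ (_ : p ∈ s), {xs : ℕ → Cantor | xs m p = true} := by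
      ext xs
      simp only [Set.mem_setOf_eq, Set.mem_iInter, ph1]
      constructor
      · intro h p hp; exact (h.2.1 p hp).2
      · intro h; exact ⟨h1.1, fun p hp => ⟨h1.2.1 p hp, h p hp⟩, h1.2.2⟩
    rw [this]
    exact MeasurableSet.iInter fun p => MeasurableSet.iInter fun _ => ev_coord m p
  · have : {xs : ℕ → Cantor | ph1 A xs m N s} = ∅ := by
      ext xs
      simp only [Set.mem_setOf_eq, Set.mem_empty_iff_false, iff_false, ph1]
      intro h
      exact h1 ⟨h.1, fun p hp => (h.2.1 p hp).1, h.2.2⟩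
    rw [this]
    exact MeasurableSet.empty

lemma ev_SS (m : ℕ) (s : Finset ℕ) :
    MeasurableSet {xs : ℕ → Cantor | SS A xs m = s} := by
  induction m generalizing s with
  | zero => exact ev_pick ∅ (fun xs => ph1 A xs 0 0) (fun s' => ev_ph1 A 0 0 s') s
  | succ m ih =>
    have := ev_bind (fun xs => SS A xs m) ih
      (fun d => {xs : ℕ → Cantor | pick ∅ (ph1 A xs (m + 1) (d.sup id)) = s})
      (fun d => ev_pick ∅ (fun xs => ph1 A xs (m + 1) (d.sup id))
        (fun s' => ev_ph1 A (m + 1) (d.sup id) s') s)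
    exact this

lemma ev_y (p : ℕ) : MeasurableSet {xs : ℕ → Cantor | p ∈ yset A xs} := by
  have : {xs : ℕ → Cantor | p ∈ yset A xs} =
      ⋃ m : ℕ, {xs : ℕ → Cantor | p ∈ SS A xs m} := by
    ext xs; simp [yset]
  rw [this]
  exact MeasurableSet.iUnion fun m =>
    ev_val (fun xs => SS A xs m) (ev_SS A m) (fun d => p ∈ d)

lemma ev_nn (k v : ℕ) : MeasurableSet {xs : ℕ → Cantor | nn A xs k = v} := by
  induction k generalizing v with
  | zero =>
    have : {xs : ℕ → Cantor | nn A xs 0 = v} = {xs : ℕ → Cantor | 0 = v} := rfl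
    rw [this]; exact ev_const _
  | succ k ih =>
    have hP : ∀ w : ℕ, ∀ j : ℕ, MeasurableSet
        {xs : ℕ → Cantor | w < j ∧ ∀ p ∈ yset A xs, j < p → xs w p = true} := by
      intro w j
      have : {xs : ℕ → Cantor | w < j ∧ ∀ p ∈ yset A xs, j < p → xs w p = true} =
          {_xs : ℕ → Cantor | w < j} ∩
          ⋂ p : ℕ, ({xs : ℕ → Cantor | p ∈ yset A xs} ∩ {_xs : ℕ → Cantor | j < p})ᶜ ∪
            {xs : ℕ → Cantor | xs w p = true} := by
        ext xs
        simp only [Set.mem_setOf_eq, Set.mem_inter_iff, Set.mem_iInter, Set.mem_union,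
          Set.mem_compl_iff, not_and]
        constructor
        · rintro ⟨h1, h2⟩
          refine ⟨h1, fun p => ?_⟩
          by_cases hy : p ∈ yset A xs ∧ j < p
          · exact Or.inr (h2 p hy.1 hy.2)
          · exact Or.inl (fun hp hj => hy ⟨hp, hj⟩)
        · rintro ⟨h1, h2⟩
          refine ⟨h1, fun p hp hj => ?_⟩
          rcases h2 p with h | h
          · exact absurd hj (h hp)
          · exact h
      rw [this]
      refine (ev_const _).inter (MeasurableSet.iInter fun p => ?_)
      exact (((ev_y A p).inter (ev_const _)).compl).union (ev_coord w p)
    exact ev_bind (fun xs => nn A xs k) ih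
      (fun w => {xs : ℕ → Cantor |
        pick 0 (fun j => w < j ∧ ∀ p ∈ yset A xs, j < p → xs w p = true) = v})
      (fun w => ev_pick 0 _ (fun j => hP w j) v)

lemma ev_H (e p : ℕ) : MeasurableSet {xs : ℕ → Cantor | p ∈ Hset A xs e} := by
  have : {xs : ℕ → Cantor | p ∈ Hset A xs e} =
      {xs : ℕ → Cantor | p ∈ yset A xs} ∩
      ⋃ j : ℕ, ({xs : ℕ → Cantor | nn A xs (2 * j + e) < p} ∩
        {xs : ℕ → Cantor | p ≤ nn A xs (2 * j + e + 1)}) := by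
    ext xs
    constructor
    · rintro ⟨h1, j, h2⟩
      exact ⟨h1, Set.mem_iUnion.mpr ⟨j, h2⟩⟩
    · rintro ⟨h1, h2⟩
      obtain ⟨j, h3⟩ := Set.mem_iUnion.mp h2
      exact ⟨h1, j, h3⟩
  rw [this]
  refine (ev_y A p).inter (MeasurableSet.iUnion fun j => MeasurableSet.inter ?_ ?_)
  · exact ev_val (fun xs => nn A xs (2 * j + e)) (ev_nn A _) (fun v => v < p)
  · exact ev_val (fun xs => nn A xs (2 * j + e + 1)) (ev_nn A _) (fun v => p ≤ v)

lemma ev_tr (e b j : ℕ) (f : Finset ℕ) :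
    MeasurableSet {xs : ℕ → Cantor | tr A xs e b j = f} := by
  have htr : ∀ xs : ℕ → Cantor, tr A xs e b j = f ↔
      (f ⊆ Finset.Ioc b j ∧ ∀ p ∈ Finset.Ioc b j, (p ∈ f ↔ p ∈ Hset A xs e)) := by
    intro xs
    constructor
    · rintro rfl
      refine ⟨Finset.filter_subset _ _, fun p hp => ?_⟩
      simp [tr, Finset.mem_filter, hp]
    · rintro ⟨h1, h2⟩
      ext p
      simp only [tr, Finset.mem_filter]
      constructor
      · rintro ⟨hp1, hp2⟩; exact (h2 p hp1).mpr hp2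
      · intro hp
        have hpIoc := h1 hp
        exact ⟨hpIoc, (h2 p hpIoc).mp hp⟩
  have : {xs : ℕ → Cantor | tr A xs e b j = f} =
      {_xs : ℕ → Cantor | f ⊆ Finset.Ioc b j} ∩
      ⋂ (p : ℕ), ⋂ (_ : p ∈ Finset.Ioc b j),
        {xs : ℕ → Cantor | p ∈ f ↔ p ∈ Hset A xs e} := by
    ext xs
    simp only [Set.mem_setOf_eq, Set.mem_inter_iff, Set.mem_iInter, htr xs]
  rw [this]
  refine (ev_const _).inter (MeasurableSet.iInter fun p => MeasurableSet.iInter fun _ => ?_)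
  by_cases hpf : p ∈ f
  · have : {xs : ℕ → Cantor | p ∈ f ↔ p ∈ Hset A xs e} =
        {xs : ℕ → Cantor | p ∈ Hset A xs e} := by
      ext xs; simp [hpf]
    rw [this]; exact ev_H A e p
  · have : {xs : ℕ → Cantor | p ∈ f ↔ p ∈ Hset A xs e} =
        {xs : ℕ → Cantor | p ∈ Hset A xs e}ᶜ := by
      ext xs; simp [hpf]
    rw [this]; exact (ev_H A e p).compl

lemma ev_eps (v : ℕ) : MeasurableSet {xs : ℕ → Cantor | eps A xs = v} := by
  have hE : MeasurableSet {xs : ℕ → Cantor | ∃ m b : ℕ, ∀ j, Cov A m (tr A xs 0 b j)} := by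
    have : {xs : ℕ → Cantor | ∃ m b : ℕ, ∀ j, Cov A m (tr A xs 0 b j)} =
        ⋃ (m : ℕ), ⋃ (b : ℕ), ⋂ (j : ℕ), {xs : ℕ → Cantor | Cov A m (tr A xs 0 b j)} := by
      ext xs; simp only [Set.mem_setOf_eq, Set.mem_iUnion, Set.mem_iInter]
    rw [this]
    exact MeasurableSet.iUnion fun m => MeasurableSet.iUnion fun b =>
      MeasurableSet.iInter fun j =>
        ev_val (fun xs => tr A xs 0 b j) (ev_tr A 0 b j) (fun d => Cov A m d)
  rcases Nat.lt_or_ge v 2 with hv | hv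
  · interval_cases v
    · have : {xs : ℕ → Cantor | eps A xs = 0} =
          {xs : ℕ → Cantor | ∃ m b : ℕ, ∀ j, Cov A m (tr A xs 0 b j)}ᶜ := by
        ext xs
        simp only [eps, Set.mem_setOf_eq, Set.mem_compl_iff]
        by_cases h : ∃ m b : ℕ, ∀ j, Cov A m (tr A xs 0 b j) <;> simp [h]
      rw [this]; exact hE.compl
    · have : {xs : ℕ → Cantor | eps A xs = 1} =
          {xs : ℕ → Cantor | ∃ m b : ℕ, ∀ j, Cov A m (tr A xs 0 b j)} := by
        ext xs
        simp only [eps, Set.mem_setOf_eq]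
        by_cases h : ∃ m b : ℕ, ∀ j, Cov A m (tr A xs 0 b j) <;> simp [h]
      rw [this]; exact hE
  · have : {xs : ℕ → Cantor | eps A xs = v} = ∅ := by
      ext xs
      simp only [eps, Set.mem_setOf_eq, Set.mem_empty_iff_false, iff_false]
      by_cases h : ∃ m b : ℕ, ∀ j, Cov A m (tr A xs 0 b j) <;> simp [h] <;> omega
    rw [this]; exact MeasurableSet.empty

lemma ev_ph2 (m N : ℕ) (s : Finset ℕ) :
    MeasurableSet {xs : ℕ → Cantor | ph2 A xs m N s} := by
  have h1 : MeasurableSet {xs : ℕ → Cantor | ∀ p ∈ s, p ∈ Hset A xs (eps A xs) ∧ N < p} := by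
    have : {xs : ℕ → Cantor | ∀ p ∈ s, p ∈ Hset A xs (eps A xs) ∧ N < p} =
        ⋂ (p : ℕ), ⋂ (_ : p ∈ s),
          ({xs : ℕ → Cantor | p ∈ Hset A xs (eps A xs)} ∩ {_xs : ℕ → Cantor | N < p}) := by
      ext xs
      simp only [Set.mem_setOf_eq, Set.mem_iInter, Set.mem_inter_iff]
    rw [this]
    refine MeasurableSet.iInter fun p => MeasurableSet.iInter fun _ =>
      MeasurableSet.inter ?_ (ev_const _)
    exact ev_bind (fun xs => eps A xs) (ev_eps A)
      (fun e => {xs : ℕ → Cantor | p ∈ Hset A xs e}) (fun e => ev_H A e p)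
  have h2 : MeasurableSet {xs : ℕ → Cantor |
      ∀ p ∈ s, ∀ q ∈ s, p < q → ∃ k, p ≤ nn A xs k ∧ nn A xs (k + 1) < q} := by
    have : {xs : ℕ → Cantor | ∀ p ∈ s, ∀ q ∈ s, p < q →
        ∃ k, p ≤ nn A xs k ∧ nn A xs (k + 1) < q} =
        ⋂ (p : ℕ), ⋂ (_ : p ∈ s), ⋂ (q : ℕ), ⋂ (_ : q ∈ s), ⋂ (_ : p < q),
          ⋃ (k : ℕ), ({xs : ℕ → Cantor | p ≤ nn A xs k} ∩
            {xs : ℕ → Cantor | nn A xs (k + 1) < q}) := by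
      ext xs
      simp only [Set.mem_setOf_eq, Set.mem_iInter, Set.mem_iUnion, Set.mem_inter_iff]
    rw [this]
    refine MeasurableSet.iInter fun p => MeasurableSet.iInter fun _ =>
      MeasurableSet.iInter fun q => MeasurableSet.iInter fun _ =>
      MeasurableSet.iInter fun _ => MeasurableSet.iUnion fun k => MeasurableSet.inter ?_ ?_
    · exact ev_val (fun xs => nn A xs k) (ev_nn A k) (fun v => p ≤ v)
    · exact ev_val (fun xs => nn A xs (k + 1)) (ev_nn A (k + 1)) (fun v => v < q)
  have : {xs : ℕ → Cantor | ph2 A xs m N s} =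
      ({_xs : ℕ → Cantor | s.Nonempty} ∩
        {xs : ℕ → Cantor | ∀ p ∈ s, p ∈ Hset A xs (eps A xs) ∧ N < p}) ∩
      ({xs : ℕ → Cantor | ∀ p ∈ s, ∀ q ∈ s, p < q →
          ∃ k, p ≤ nn A xs k ∧ nn A xs (k + 1) < q} ∩
        {_xs : ℕ → Cantor | ¬ Cov A m s}) := by
    ext xs
    simp only [ph2, Set.mem_setOf_eq, Set.mem_inter_iff]
    tauto
  rw [this]
  exact ((ev_const _).inter h1).inter (h2.inter (ev_const _))

lemma ev_uK (m : ℕ) (d : Finset ℕ × ℕ) :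
    MeasurableSet {xs : ℕ → Cantor | uK A xs m = d} := by
  induction m generalizing d with
  | zero =>
    have : {xs : ℕ → Cantor | uK A xs 0 = d} =
        {xs : ℕ → Cantor | pick ∅ (ph2 A xs 0 (nn A xs 1)) = d.1} ∩
        {_xs : ℕ → Cantor | 0 = d.2} := by
      ext xs
      simp only [uK, Set.mem_setOf_eq, Set.mem_inter_iff, Prod.ext_iff]
    rw [this]
    refine MeasurableSet.inter ?_ (ev_const _)
    exact ev_bind (fun xs => nn A xs 1) (ev_nn A 1)
      (fun w => {xs : ℕ → Cantor | pick ∅ (ph2 A xs 0 w) = d.1})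
      (fun w => ev_pick ∅ (fun xs => ph2 A xs 0 w) (fun s' => ev_ph2 A 0 w s') d.1)
  | succ m ih =>
    refine ev_bind (fun xs => uK A xs m) ih
      (fun prev => {xs : ℕ → Cantor |
        (pick ∅ (ph2 A xs (m + 1)
            (nn A xs ((pick 0 (fun k => ∀ p ∈ prev.1, p ≤ nn A xs k)) + 1))),
          pick 0 (fun k => ∀ p ∈ prev.1, p ≤ nn A xs k)) = d}) ?_
    intro prev
    have hKev : ∀ K : ℕ, MeasurableSet
        {xs : ℕ → Cantor | pick 0 (fun k => ∀ p ∈ prev.1, p ≤ nn A xs k) = K} := by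
      intro K
      refine ev_pick 0 (fun xs k => ∀ p ∈ prev.1, p ≤ nn A xs k) (fun k => ?_) K
      have : {xs : ℕ → Cantor | ∀ p ∈ prev.1, p ≤ nn A xs k} =
          ⋂ (p : ℕ), ⋂ (_ : p ∈ prev.1), {xs : ℕ → Cantor | p ≤ nn A xs k} := by
        ext xs; simp only [Set.mem_setOf_eq, Set.mem_iInter]
      rw [this]
      exact MeasurableSet.iInter fun p => MeasurableSet.iInter fun _ =>
        ev_val (fun xs => nn A xs k) (ev_nn A k) (fun v => p ≤ v)
    refine ev_bind (fun xs => pick 0 (fun k => ∀ p ∈ prev.1, p ≤ nn A xs k)) hKev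
      (fun K => {xs : ℕ → Cantor |
        (pick ∅ (ph2 A xs (m + 1) (nn A xs (K + 1))), K) = d}) ?_
    intro K
    show MeasurableSet {xs : ℕ → Cantor | (pick ∅ (ph2 A xs (m + 1) (nn A xs (K + 1))), K) = d}
    have : {xs : ℕ → Cantor | (pick ∅ (ph2 A xs (m + 1) (nn A xs (K + 1))), K) = d} =
        {xs : ℕ → Cantor | pick ∅ (ph2 A xs (m + 1) (nn A xs (K + 1))) = d.1} ∩
        {_xs : ℕ → Cantor | K = d.2} := by
      ext xs
      simp only [Set.mem_setOf_eq, Set.mem_inter_iff, Prod.ext_iff]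
    rw [this]
    refine MeasurableSet.inter ?_ (ev_const _)
    exact ev_bind (fun xs => nn A xs (K + 1)) (ev_nn A (K + 1))
      (fun w => {xs : ℕ → Cantor | pick ∅ (ph2 A xs (m + 1) w) = d.1})
      (fun w => ev_pick ∅ (fun xs => ph2 A xs (m + 1) w) (fun s' => ev_ph2 A (m + 1) w s') d.1)

lemma meas_Ffun : Measurable (Ffun A) := by
  rw [measurable_pi_iff]
  intro p
  apply measurable_to_countable'
  intro b
  have hT : MeasurableSet {xs : ℕ → Cantor | ∃ m, p ∈ (uK A xs m).1} := by
    have : {xs : ℕ → Cantor | ∃ m, p ∈ (uK A xs m).1} =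
        ⋃ m : ℕ, {xs : ℕ → Cantor | p ∈ (uK A xs m).1} := by
      ext xs; simp only [Set.mem_setOf_eq, Set.mem_iUnion]
    rw [this]
    exact MeasurableSet.iUnion fun m =>
      ev_val (fun xs => uK A xs m) (ev_uK A m) (fun d => p ∈ d.1)
  have : (fun xs => Ffun A xs p) ⁻¹' {b} =
      if b = true then {xs : ℕ → Cantor | ∃ m, p ∈ (uK A xs m).1}
      else {xs : ℕ → Cantor | ∃ m, p ∈ (uK A xs m).1}ᶜ := by
    ext xs
    by_cases h : ∃ m, p ∈ (uK A xs m).1 <;> cases b <;> simp [Ffun, h]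
  rw [this]
  by_cases hb : b = true
  · rw [if_pos hb]; exact hT
  · rw [if_neg hb]; exact hT.compl


/-! ### Correctness of the construction -/

def Idl : Set Cantor :=
  {x : Cantor | ∃ (s : Finset ℕ) (l : List Cantor),
    (∀ a ∈ l, a ∈ A) ∧ toSet x ⊆ (s : Set ℕ) ∪ ⋃ a ∈ l, toSet a}

variable {A}

lemma mem_Idl_iff_small {x : Cantor} : x ∈ Idl A ↔ SmallId A (toSet x) := by
  constructor
  · rintro ⟨s, l, hl, hsub⟩
    refine ⟨s.sup id, l.length, fun i => l.get i, fun i => hl _ (l.get_mem _), ?_⟩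
    rintro p ⟨hp, hpb⟩
    rcases hsub hp with h | h
    · exact absurd (Set.mem_Iic.mpr (Finset.le_sup (f := id) (by exact_mod_cast h))) hpb
    · rw [← listU]; exact h
  · rintro ⟨b, m, ab, hab, hsub⟩
    refine ⟨Finset.Iic b, List.ofFn ab, ?_, ?_⟩
    · intro a ha
      obtain ⟨i, rfl⟩ := List.mem_ofFn.mp ha
      exact hab i
    · intro p hp
      by_cases hpb : p ≤ b
      · exact Or.inl (by simpa using hpb)
      · right
        have := hsub ⟨hp, fun h => hpb (Set.mem_Iic.mp h)⟩
        obtain ⟨i, hi⟩ := Set.mem_iUnion.mp this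
        exact Set.mem_biUnion (List.mem_ofFn.mpr ⟨i, rfl⟩) hi

lemma not_Idl_iff_pos {x : Cantor} : x ∉ Idl A ↔ Pos A (toSet x) := by
  rw [pos_iff_not_small, mem_Idl_iff_small]

/-- The main correctness lemma. -/
lemma Ffun_spec (hclosed : IsClosed A)
    (hAD : ∀ a ∈ A, ∀ b ∈ A, a ≠ b → (toSet a ∩ toSet b).Finite)
    (xs : ℕ → Cantor) (hxs : ∀ n, xs n ∉ Idl A)
    (hdec : ∀ n, toSet (xs (n + 1)) ⊆ toSet (xs n)) :
    Ffun A xs ∉ Idl A ∧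
      ∀ n ∈ toSet (Ffun A xs), toSet (Ffun A xs) \ Set.Iic n ⊆ toSet (xs n) := by
  classical
  have hdec' : ∀ i j, i ≤ j → toSet (xs j) ⊆ toSet (xs i) := by
    intro i j hij
    induction j, hij using Nat.le_induction with
    | base => exact subset_rfl
    | succ j hij ih => exact (hdec j).trans ih
  have hposX : ∀ n, Pos A (toSet (xs n)) := fun n => not_Idl_iff_pos.mp (hxs n)
  -- Stage A : the sets SS m
  have hph1 : ∀ m N : ℕ, ∃ s, ph1 A xs m N s := by
    intro m N
    obtain ⟨s, hne, hsub, hgt, _, hnc⟩ := lemmaQ hclosed hAD (hposX m)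
      (fun j => {j}) (fun j => Set.finite_singleton j)
      (fun j j' ⟨p, hp, hp'⟩ => by
        rw [Set.mem_singleton_iff] at hp hp'; rw [← hp, hp'])
      (fun p _ => Set.mem_iUnion.mpr ⟨p, rfl⟩) m N
    exact ⟨s, hne, fun p hp => ⟨hgt p hp, hsub hp⟩, hnc⟩
  have hS0 : ph1 A xs 0 0 (SS A xs 0) := pick_spec _ _ (hph1 0 0)
  have hSsucc : ∀ m, ph1 A xs (m + 1) ((SS A xs m).sup id) (SS A xs (m + 1)) :=
    fun m => pick_spec _ _ (hph1 (m + 1) _)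
  have hSne : ∀ m, (SS A xs m).Nonempty := by
    intro m; cases m with
    | zero => exact hS0.1
    | succ m => exact (hSsucc m).1
  have hSX : ∀ m, ∀ p ∈ SS A xs m, p ∈ toSet (xs m) := by
    intro m; cases m with
    | zero => exact fun p hp => (hS0.2.1 p hp).2
    | succ m => exact fun p hp => ((hSsucc m).2.1 p hp).2
  have hSnc : ∀ m, ¬ Cov A m (SS A xs m) := by
    intro m; cases m with
    | zero => exact hS0.2.2
    | succ m => exact (hSsucc m).2.2
  have hSgt : ∀ m, ∀ p ∈ SS A xs (m + 1), (SS A xs m).sup id < p :=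
    fun m p hp => ((hSsucc m).2.1 p hp).1
  have hsupmono : ∀ m, (SS A xs m).sup id < (SS A xs (m + 1)).sup id := by
    intro m
    obtain ⟨q, hq⟩ := hSne (m + 1)
    exact lt_of_lt_of_le (hSgt m q hq) (Finset.le_sup (f := id) hq)
  have hsupge : ∀ m, m ≤ (SS A xs m).sup id := by
    intro m
    induction m with
    | zero => exact Nat.zero_le _
    | succ m ih => exact lt_of_le_of_lt ih (hsupmono m)
  -- the set y
  have hytail : ∀ n : ℕ, ∃ B : ℕ, ∀ p ∈ yset A xs, B < p → p ∈ toSet (xs n) := by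
    intro n
    refine ⟨(Finset.range n).sup (fun m => (SS A xs m).sup id), ?_⟩
    rintro p ⟨m, hpm⟩ hBp
    have hmn : n ≤ m := by
      by_contra hlt
      push_neg at hlt
      have h1 : p ≤ (SS A xs m).sup id := Finset.le_sup (f := id) hpm
      have h2 : (SS A xs m).sup id ≤ (Finset.range n).sup (fun m => (SS A xs m).sup id) :=
        Finset.le_sup (f := fun m => (SS A xs m).sup id) (Finset.mem_range.mpr hlt)
      omega
    exact hdec' n m hmn (hSX m p hpm)
  have hposy : Pos A (yset A xs) := by
    intro mm ab hab
    apply Set.infinite_of_forall_exists_gt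
    intro b
    set m' := max mm b + 1 with hm'
    have hnotsub : ¬ ((SS A xs m' : Set ℕ) ⊆ Uu ab) := by
      intro hsub
      exact hSnc m' (cov_of_subset (by omega) hab (hSne m') hsub)
    rw [Set.not_subset] at hnotsub
    obtain ⟨p, hp1, hp2⟩ := hnotsub
    have hp1' : p ∈ SS A xs m' := by exact_mod_cast hp1
    refine ⟨p, ⟨⟨m', hp1'⟩, hp2⟩, ?_⟩
    have := hSgt (max mm b) p hp1'
    have := hsupge (max mm b)
    omega
  -- the interval bounds nn
  have hnn : ∀ k, nn A xs k < nn A xs (k + 1) ∧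
      ∀ p ∈ yset A xs, nn A xs (k + 1) < p → p ∈ toSet (xs (nn A xs k)) := by
    intro k
    obtain ⟨B, hB⟩ := hytail (nn A xs k)
    have hex : ∃ j, nn A xs k < j ∧ ∀ p ∈ yset A xs, j < p →
        xs (nn A xs k) p = true := by
      refine ⟨max B (nn A xs k) + 1, by omega, ?_⟩
      intro p hp hjp
      exact hB p hp (by omega)
    exact pick_spec _ _ hex
  have hnmono : StrictMono (nn A xs) := strictMono_nat_of_lt_succ fun k => (hnn k).1
  have hnle : ∀ k, k ≤ nn A xs k := fun k => hnmono.le_apply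
  -- splitting y into the two halves
  have hsplit : ∀ p ∈ yset A xs, 0 < p → p ∈ Hset A xs 0 ∪ Hset A xs 1 := by
    intro p hp hp0
    have hex : ∃ k, nn A xs k < p ∧ ¬ (nn A xs (k + 1) < p) := by
      by_contra hcon
      push_neg at hcon
      have hall : ∀ k, nn A xs k < p := by
        intro k
        induction k with
        | zero => exact hp0
        | succ k ih => exact hcon k ih
      have := hall p
      have := hnle p
      omega
    obtain ⟨k, hk1, hk2⟩ := hex
    push_neg at hk2
    rcases Nat.even_or_odd k with ⟨j, hj⟩ | ⟨j, hj⟩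
    · left
      refine ⟨hp, j, ?_, ?_⟩
      · rw [show 2 * j + 0 = k by omega]; exact hk1
      · rw [show 2 * j + 0 + 1 = k + 1 by omega]; exact hk2
    · right
      refine ⟨hp, j, ?_, ?_⟩
      · rw [show 2 * j + 1 = k by omega]; exact hk1
      · rw [show 2 * j + 1 + 1 = k + 1 by omega]; exact hk2
  -- the dichotomy
  have htr_link : ∀ e : ℕ, SmallId A (Hset A xs e) ↔
      (∃ m b : ℕ, ∀ j, Cov A m (tr A xs e b j)) := by
    intro e
    constructor
    · rintro ⟨b, m, ab, hab, hsub⟩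
      refine ⟨m, b, fun j => ⟨ab, hab, ?_⟩⟩
      intro p hp
      have hp' := Finset.mem_filter.mp (by exact_mod_cast hp)
      have hpb : b < p := (Finset.mem_Ioc.mp hp'.1).1
      exact hsub ⟨hp'.2, fun h => absurd (Set.mem_Iic.mp h) (by omega)⟩
    · rintro ⟨m, b, hj⟩
      have := cov_compact hclosed (m := m) (c := Hset A xs e \ Set.Iic b) ?_
      · obtain ⟨ab, hab, hsub⟩ := this
        exact ⟨b, m, ab, hab, hsub⟩
      · intro J
        obtain ⟨ab, hab, hsub⟩ := hj J
        refine ⟨ab, hab, ?_⟩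
        rintro p ⟨⟨hp1, hp2⟩, hp3⟩
        refine hsub ?_
        have : p ∈ tr A xs e b J := by
          rw [tr, Finset.mem_filter, Finset.mem_Ioc]
          refine ⟨⟨?_, Set.mem_Iic.mp hp3⟩, hp1⟩
          by_contra hc
          exact hp2 (Set.mem_Iic.mpr (by omega))
        exact_mod_cast this
  have hposH : Pos A (Hset A xs (eps A xs)) := by
    have hHsm : ¬ SmallId A (Hset A xs 0) ∨ ¬ SmallId A (Hset A xs 1) := by
      by_contra hcon
      push_neg at hcon
      apply pos_iff_not_small.mp hposy
      apply small_mono (c' := Set.Iic 0 ∪ (Hset A xs 0 ∪ Hset A xs 1))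
      · intro p hp
        rcases Nat.eq_zero_or_pos p with h0 | h0
        · exact Or.inl (Set.mem_Iic.mpr (by omega))
        · exact Or.inr (hsplit p hp h0)
      · refine small_union ⟨0, 0, fun i => i.elim0, fun i => i.elim0, ?_⟩
          (small_union hcon.1 hcon.2)
        rintro p ⟨hp1, hp2⟩
        exact absurd hp1 hp2
    by_cases hE : ∃ m b : ℕ, ∀ j, Cov A m (tr A xs 0 b j)
    · have heps : eps A xs = 1 := by rw [eps, if_pos hE]
      rw [heps]
      rcases hHsm with h | h
      · exact absurd ((htr_link 0).mpr hE) h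
      · exact pos_iff_not_small.mpr h
    · have heps : eps A xs = 0 := by rw [eps, if_neg hE]
      rw [heps]
      apply pos_iff_not_small.mpr
      intro hsm
      exact hE ((htr_link 0).mp hsm)
  -- Stage u : the selector
  set e := eps A xs with he
  have hph2 : ∀ m N : ℕ, ∃ s, ph2 A xs m N s := by
    intro m N
    obtain ⟨s, hne, hsub, hgt, hsel, hnc⟩ := lemmaQ hclosed hAD hposH
      (fun j => Hset A xs e ∩ Set.Ioc (nn A xs (2 * j + e)) (nn A xs (2 * j + e + 1)))
      (fun j => (Set.finite_Ioc _ _).subset Set.inter_subset_right)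
      (fun j j' ⟨p, hp, hp'⟩ => by
        by_contra hne'
        rcases Nat.lt_or_ge j j' with hlt | hge
        · have h1 : p ≤ nn A xs (2 * j + e + 1) := hp.2.2
          have h2 : nn A xs (2 * j' + e) < p := hp'.2.1
          have h3 : nn A xs (2 * j + e + 1) ≤ nn A xs (2 * j' + e) :=
            hnmono.monotone (by omega)
          omega
        · have hlt : j' < j := by omega
          have h1 : p ≤ nn A xs (2 * j' + e + 1) := hp'.2.2
          have h2 : nn A xs (2 * j + e) < p := hp.2.1
          have h3 : nn A xs (2 * j' + e + 1) ≤ nn A xs (2 * j + e) :=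
            hnmono.monotone (by omega)
          omega)
      (fun p hp => by
        obtain ⟨hy, j, h1, h2⟩ := hp
        exact Set.mem_iUnion.mpr ⟨j, ⟨hy, j, h1, h2⟩, Set.mem_Ioc.mpr ⟨h1, h2⟩⟩)
      m N
    obtain ⟨g, hg1, hg2⟩ := hsel
    refine ⟨s, hne, fun p hp => ⟨hsub hp, hgt p hp⟩, ?_, hnc⟩
    intro p hp q hq hpq
    have hpg := hg1 p hp
    have hqg := hg1 q hq
    have hggne : g p ≠ g q := fun hh =>
      (by omega : p ≠ q) (hg2 (by exact_mod_cast hp) (by exact_mod_cast hq) hh)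
    have hglt : g p < g q := by
      by_contra hge
      push_neg at hge
      have hlt : g q < g p := by omega
      have h1 : q ≤ nn A xs (2 * g q + e + 1) := hqg.2.2
      have h2 : nn A xs (2 * g p + e) < p := hpg.2.1
      have h3 : nn A xs (2 * g q + e + 1) ≤ nn A xs (2 * g p + e) :=
        hnmono.monotone (by omega)
      omega
    refine ⟨2 * g p + e + 1, hpg.2.2, ?_⟩
    have h3 : nn A xs (2 * g p + e + 1 + 1) ≤ nn A xs (2 * g q + e) :=
      hnmono.monotone (by omega)
    have h4 : nn A xs (2 * g q + e) < q := hqg.2.1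
    omega
  have hu0 : ph2 A xs 0 (nn A xs 1) ((uK A xs 0).1) := pick_spec _ _ (hph2 0 _)
  have hKspec : ∀ m, ∀ p ∈ (uK A xs m).1, p ≤ nn A xs ((uK A xs (m + 1)).2) := by
    intro m
    have hex : ∃ k, ∀ p ∈ (uK A xs m).1, p ≤ nn A xs k := by
      refine ⟨((uK A xs m).1).sup id, fun p hp => ?_⟩
      exact le_trans (Finset.le_sup (f := id) hp) (hnle _)
    exact pick_spec _ _ hex
  have husucc : ∀ m, ph2 A xs (m + 1)
      (nn A xs ((uK A xs (m + 1)).2 + 1)) ((uK A xs (m + 1)).1) :=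
    fun m => pick_spec _ _ (hph2 (m + 1) _)
  have hune : ∀ m, ((uK A xs m).1).Nonempty := by
    intro m; cases m with
    | zero => exact hu0.1
    | succ m => exact (husucc m).1
  have huH : ∀ m, ∀ p ∈ (uK A xs m).1, p ∈ Hset A xs e := by
    intro m; cases m with
    | zero => exact fun p hp => (hu0.2.1 p hp).1
    | succ m => exact fun p hp => ((husucc m).2.1 p hp).1
  have hunc : ∀ m, ¬ Cov A m ((uK A xs m).1) := by
    intro m; cases m with
    | zero => exact hu0.2.2.2
    | succ m => exact (husucc m).2.2.2
  have huSEP : ∀ m, ∀ p ∈ (uK A xs m).1, ∀ q ∈ (uK A xs m).1, p < q →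
      ∃ k, p ≤ nn A xs k ∧ nn A xs (k + 1) < q := by
    intro m; cases m with
    | zero => exact hu0.2.2.1
    | succ m => exact (husucc m).2.2.1
  have hugt : ∀ m, ∀ q ∈ (uK A xs (m + 1)).1, nn A xs ((uK A xs (m + 1)).2 + 1) < q :=
    fun m q hq => ((husucc m).2.1 q hq).2
  have horder : ∀ m p q, p ∈ (uK A xs m).1 → q ∈ (uK A xs (m + 1)).1 → p < q := by
    intro m p q hp hq
    have h1 := hKspec m p hp
    have h2 := hugt m q hq
    have h3 : nn A xs ((uK A xs (m + 1)).2) < nn A xs ((uK A xs (m + 1)).2 + 1) :=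
      hnmono (by omega)
    omega
  have horder' : ∀ m m', m < m' → ∀ p q, p ∈ (uK A xs m).1 → q ∈ (uK A xs m').1 →
      p < q := by
    intro m m' hmm'
    induction m', hmm' using Nat.le_induction with
    | base => exact fun p q hp hq => horder m p q hp hq
    | succ m' hmm' ih =>
      intro p q hp hq
      obtain ⟨r, hr⟩ := hune m'
      exact lt_trans (ih p r hp hr) (horder m' r q hr hq)
  have hulow : ∀ m, ∀ p ∈ (uK A xs m).1, m ≤ p := by
    intro m
    induction m with
    | zero => exact fun p _ => Nat.zero_le p
    | succ m ih =>
      intro p hp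
      obtain ⟨r, hr⟩ := hune m
      have := ih r hr
      have := horder m r p hr hp
      omega
  -- membership in the result
  have hmemF : ∀ p, p ∈ toSet (Ffun A xs) ↔ ∃ m, p ∈ (uK A xs m).1 := by
    intro p
    by_cases h : ∃ m, p ∈ (uK A xs m).1 <;>
      simp [Ffun, toSet, h]
  -- positivity of the result
  have hposF : Pos A (toSet (Ffun A xs)) := by
    intro mm ab hab
    apply Set.infinite_of_forall_exists_gt
    intro b
    set m' := max mm b + 1 with hm'
    have hnotsub : ¬ (((uK A xs m').1 : Set ℕ) ⊆ Uu ab) := by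
      intro hsub
      exact hunc m' (cov_of_subset (by omega) hab (hune m') hsub)
    rw [Set.not_subset] at hnotsub
    obtain ⟨p, hp1, hp2⟩ := hnotsub
    have hp1' : p ∈ (uK A xs m').1 := by exact_mod_cast hp1
    refine ⟨p, ⟨(hmemF p).mpr ⟨m', hp1'⟩, hp2⟩, ?_⟩
    have := hulow m' p hp1'
    omega
  constructor
  · exact not_Idl_iff_pos.mpr hposF
  · rintro n hn q ⟨hq, hqn⟩
    have hnq : n < q := by
      by_contra hle
      exact hqn (Set.mem_Iic.mpr (by omega))
    obtain ⟨m, hm⟩ := (hmemF n).mp hn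
    obtain ⟨m', hm'⟩ := (hmemF q).mp hq
    have hSEPnq : ∃ k, n ≤ nn A xs k ∧ nn A xs (k + 1) < q := by
      rcases lt_trichotomy m m' with hlt | heq | hgt
      · -- different stages
        cases m' with
        | zero => omega
        | succ m'' =>
          refine ⟨(uK A xs (m'' + 1)).2, ?_, hugt m'' q hm'⟩
          rcases Nat.lt_or_ge m m'' with h | h
          · obtain ⟨r, hr⟩ := hune m''
            have h1 := horder' m m'' h n r hm hr
            have h2 := hKspec m'' r hr
            omega
          · have hmeq : m = m'' := by omega
            subst hmeq
            exact hKspec m n hm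
      · subst heq
        exact huSEP m n hm q hm' hnq
      · have := horder' m' m hgt q n hm' hm
        omega
    obtain ⟨k, hk1, hk2⟩ := hSEPnq
    have hqy : q ∈ yset A xs := (huH m' q hm').1
    have hqx : q ∈ toSet (xs (nn A xs k)) := (hnn k).2 q hqy hk2
    exact hdec' n (nn A xs k) hk1 hqx

end CAD


/-- For a closed almost disjoint family `A` of infinite subsets of `ℕ`, the ideal
generated by `A` together with the finite sets is uniformly selective. -/
theorem closed_ad_unif_selective (A : Set Cantor) (hclosed : IsClosed A)
    (hinf : ∀ a ∈ A, (toSet a).Infinite)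
    (hAD : ∀ a ∈ A, ∀ b ∈ A, a ≠ b → (toSet a ∩ toSet b).Finite) :
    UnifSelective {x : Cantor | ∃ (s : Finset ℕ) (l : List Cantor),
      (∀ a ∈ l, a ∈ A) ∧ toSet x ⊆ (s : Set ℕ) ∪ ⋃ a ∈ l, toSet a} := by
  exact ⟨CAD.Ffun A, CAD.meas_Ffun A,
    fun xs hxs hdec => CAD.Ffun_spec hclosed hAD xs hxs hdec⟩
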